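/- If F : ℝ^n → ℝ is Lipschitz with constant L₀, then the two-point Gaussian gradient estimator g_μ(x) = ((F(x + μu) − F(x))/μ)·u, with u ∼ N(0, I_n), satisfies E[‖g_μ(x)‖²] ≤ L₀²(n + 4)² for every x ∈ ℝ^n. -/

import Mathlib

open MeasureTheory ProbabilityTheory

/-- The standard Gaussian measure N(0, Iₙ) on ℝⁿ. -/
noncomputable def stdGaussian (n : ℕ) : Measure (Fin n → ℝ) :=
  Measure.pi fun _ => gaussianReal 0 1

/-- The Gaussian smoothing F_μ(x) = E_{u ∼ N(0,I)}[F(x + μ u)]. -/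
noncomputable def gaussSmooth {n : ℕ} (F : (Fin n → ℝ) → ℝ) (μ : ℝ) (x : Fin n → ℝ) : ℝ :=
  ∫ u, F (x + μ • u) ∂(stdGaussian n)

/-- The Euclidean norm on ℝⁿ. -/
noncomputable def euclNorm {n : ℕ} (x : Fin n → ℝ) : ℝ :=
  Real.sqrt (∑ i, (x i)^2)

/-- The two-point Gaussian gradient estimator g_μ(x) = ((F(x+μu) − F(x))/μ) u. -/
noncomputable def twoPoint {n : ℕ} (F : (Fin n → ℝ) → ℝ) (μ : ℝ)
    (x u : Fin n → ℝ) : Fin n → ℝ :=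
  fun i => ((F (x + μ • u) - F x) / μ) * u i

section Aux
open Real
lemma single_pow_le_exp {t : ℝ} (ht : 0 ≤ t) (m : ℕ) : t ^ m ≤ m.factorial * Real.exp t := by
  have h := Real.sum_le_exp_of_nonneg ht (m + 1)
  have h2 : t ^ m / m.factorial ≤ ∑ i ∈ Finset.range (m+1), t ^ i / i.factorial := by
    refine Finset.single_le_sum (f := fun i => t ^ i / i.factorial) (fun i _ => by positivity) ?_
    simp
  have hm : (0:ℝ) < m.factorial := by positivity
  calc t ^ m = (t ^ m / m.factorial) * m.factorial := by field_simp
  _ ≤ Real.exp t * m.factorial := by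
      apply mul_le_mul_of_nonneg_right (h2.trans h) hm.le
  _ = m.factorial * Real.exp t := by ring

lemma integrable_even_pow_gauss (m : ℕ) :
    Integrable (fun x : ℝ => x ^ (2*m) * Real.exp (-(1/2) * x^2)) := by
  have base : Integrable (fun x : ℝ => ((4:ℝ)^m * m.factorial) * Real.exp (-(1/4) * x^2)) :=
    (integrable_exp_neg_mul_sq (by norm_num : (0:ℝ) < 1/4)).const_mul _
  refine base.mono' ?_ ?_
  · exact Continuous.aestronglyMeasurable (by continuity)
  · refine Filter.Eventually.of_forall fun x => ?_
    have h1 : (0:ℝ) ≤ x ^ (2*m) * Real.exp (-(1/2) * x^2) :=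
      mul_nonneg ((even_two_mul m).pow_nonneg x) (Real.exp_nonneg _)
    rw [Real.norm_eq_abs, abs_of_nonneg h1]
    have key : x ^ (2*m) ≤ (4:ℝ)^m * m.factorial * Real.exp (x^2/4) := by
      have h := single_pow_le_exp (t := x^2/4) (by positivity) m
      have : x ^ (2*m) = (x^2/4)^m * 4^m := by
        rw [div_pow, pow_mul]; field_simp
      rw [this]
      calc (x^2/4)^m * 4^m ≤ (m.factorial * Real.exp (x^2/4)) * 4^m := by
            apply mul_le_mul_of_nonneg_right h (by positivity)
      _ = (4:ℝ)^m * m.factorial * Real.exp (x^2/4) := by ring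
    calc x ^ (2*m) * Real.exp (-(1/2) * x^2)
        ≤ ((4:ℝ)^m * m.factorial * Real.exp (x^2/4)) * Real.exp (-(1/2) * x^2) := by
          apply mul_le_mul_of_nonneg_right key (Real.exp_nonneg _)
      _ = (4:ℝ)^m * m.factorial * Real.exp (-(1/4) * x^2) := by
          rw [mul_assoc, mul_assoc, ← Real.exp_add]; ring_nf

lemma ioi_pow_gauss (k : ℕ) :
    ∫ x in Set.Ioi (0:ℝ), x ^ k * Real.exp (-(1/2) * x^2)
      = ((1:ℝ)/2) ^ (-((k:ℝ)+1)/2) * (1/2) * Real.Gamma (((k:ℝ)+1)/2) := by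
  have h := integral_rpow_mul_exp_neg_mul_rpow (p := 2) (q := (k:ℝ)) (b := 1/2)
    two_pos (by exact lt_of_lt_of_le (by norm_num) (Nat.cast_nonneg k)) (by norm_num)
  rw [← h]
  refine setIntegral_congr_fun measurableSet_Ioi fun x hx => ?_
  rw [Real.rpow_natCast, Real.rpow_two]

lemma even_integral_gauss (k : ℕ) (hk : Even k) :
    ∫ x : ℝ, x ^ k * Real.exp (-(1/2) * x^2)
      = 2 * ∫ x in Set.Ioi (0:ℝ), x ^ k * Real.exp (-(1/2) * x^2) := by
  rw [← integral_comp_abs (f := fun x => x ^ k * Real.exp (-(1/2) * x^2))]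
  congr 1
  funext x
  rw [hk.pow_abs, sq_abs]

lemma gauss_pdf_mul (k : ℕ) (x : ℝ) :
    gaussianPDFReal 0 1 x * x ^ k
      = (Real.sqrt (2*π))⁻¹ * (x ^ k * Real.exp (-(1/2) * x^2)) := by
  have harg : -(x - 0)^2/(2*(1:ℝ)) = -(1/2)*x^2 := by ring
  simp only [gaussianPDFReal, NNReal.coe_one, mul_one, harg]
  ring

lemma gauss_moment (k : ℕ) (hk : Even k) :
    ∫ x, x ^ k ∂(gaussianReal 0 1)
      = (Real.sqrt (2*π))⁻¹ *
        (2 * (((1:ℝ)/2) ^ (-((k:ℝ)+1)/2) * (1/2) * Real.Gamma (((k:ℝ)+1)/2))) := by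
  rw [gaussianReal_of_var_ne_zero 0 one_ne_zero]
  have hpdf : gaussianPDF 0 1 = fun x => ((gaussianPDFReal 0 1 x).toNNReal : ENNReal) := rfl
  rw [hpdf, integral_withDensity_eq_integral_smul
    ((measurable_gaussianPDFReal 0 1).real_toNNReal) (fun x => x ^ k)]
  have : ∀ x : ℝ, (gaussianPDFReal 0 1 x).toNNReal • x ^ k
      = (Real.sqrt (2*π))⁻¹ * (x ^ k * Real.exp (-(1/2) * x^2)) := by
    intro x
    rw [NNReal.smul_def, Real.coe_toNNReal _ (gaussianPDFReal_nonneg 0 1 x), smul_eq_mul, gauss_pdf_mul]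
  simp_rw [this]
  rw [integral_const_mul, even_integral_gauss k hk, ioi_pow_gauss k]

lemma gauss_moment_two : ∫ x, x ^ 2 ∂(gaussianReal 0 1) = 1 := by
  rw [gauss_moment 2 (by norm_num)]
  have h1 : (-(((2:ℕ):ℝ)+1)/2) = (-(3/2) : ℝ) := by norm_num
  have h2 : ((((2:ℕ):ℝ)+1)/2) = (3/2 : ℝ) := by norm_num
  rw [h1, h2]
  have hG : Real.Gamma (3/2 : ℝ) = (Real.sqrt π) / 2 := by
    have := Real.Gamma_add_one (s := (1/2:ℝ)) (by norm_num)
    rw [show (1/2 : ℝ) + 1 = 3/2 by norm_num, Real.Gamma_one_half_eq] at this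
    rw [this]; ring
  have hpow : ((1:ℝ)/2) ^ (-(3/2) : ℝ) = 2 * Real.sqrt 2 := by
    rw [one_div, Real.inv_rpow (by norm_num : (0:ℝ) ≤ 2), ← Real.rpow_neg (by norm_num : (0:ℝ) ≤ 2), neg_neg,
      show (3/2:ℝ) = 1 + 1/2 by norm_num, Real.rpow_add (by norm_num : (0:ℝ) < 2), Real.rpow_one,
      ← Real.sqrt_eq_rpow]
  rw [hG, hpow, Real.sqrt_mul (by norm_num : (0:ℝ) ≤ 2)]
  have hs2 : Real.sqrt 2 ≠ 0 := by positivity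
  have hsp : Real.sqrt π ≠ 0 := by positivity
  field_simp

lemma gauss_moment_four : ∫ x, x ^ 4 ∂(gaussianReal 0 1) = 3 := by
  rw [gauss_moment 4 (by decide)]
  have h1 : (-(((4:ℕ):ℝ)+1)/2) = (-(5/2) : ℝ) := by norm_num
  have h2 : ((((4:ℕ):ℝ)+1)/2) = (5/2 : ℝ) := by norm_num
  rw [h1, h2]
  have hG32 : Real.Gamma (3/2 : ℝ) = (Real.sqrt π) / 2 := by
    have := Real.Gamma_add_one (s := (1/2:ℝ)) (by norm_num)
    rw [show (1/2 : ℝ) + 1 = 3/2 by norm_num, Real.Gamma_one_half_eq] at this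
    rw [this]; ring
  have hG : Real.Gamma (5/2 : ℝ) = 3 * (Real.sqrt π) / 4 := by
    have := Real.Gamma_add_one (s := (3/2:ℝ)) (by norm_num)
    rw [show (3/2 : ℝ) + 1 = 5/2 by norm_num, hG32] at this
    rw [this]; ring
  have hpow : ((1:ℝ)/2) ^ (-(5/2) : ℝ) = 4 * Real.sqrt 2 := by
    rw [one_div, Real.inv_rpow (by norm_num : (0:ℝ) ≤ 2), ← Real.rpow_neg (by norm_num : (0:ℝ) ≤ 2), neg_neg,
      show (5/2:ℝ) = 2 + 1/2 by norm_num, Real.rpow_add (by norm_num : (0:ℝ) < 2),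
      ← Real.sqrt_eq_rpow, show ((2:ℝ)^(2:ℝ)) = 4 by rw [show (2:ℝ) = ((2:ℕ):ℝ) by norm_num, Real.rpow_natCast]; norm_num]
  rw [hG, hpow, Real.sqrt_mul (by norm_num : (0:ℝ) ≤ 2)]
  have hs2 : Real.sqrt 2 ≠ 0 := by positivity
  have hsp : Real.sqrt π ≠ 0 := by positivity
  field_simp

lemma integrable_pow_gauss (m : ℕ) :
    Integrable (fun x : ℝ => x ^ (2*m)) (gaussianReal 0 1) := by
  rw [gaussianReal_of_var_ne_zero 0 one_ne_zero]
  have hpdf : gaussianPDF 0 1 = fun x => ((gaussianPDFReal 0 1 x).toNNReal : ENNReal) := rfl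
  rw [hpdf, integrable_withDensity_iff_integrable_smul
    ((measurable_gaussianPDFReal 0 1).real_toNNReal)]
  have : ∀ x : ℝ, (gaussianPDFReal 0 1 x).toNNReal • x ^ (2*m)
      = (Real.sqrt (2*π))⁻¹ * (x ^ (2*m) * Real.exp (-(1/2) * x^2)) := by
    intro x
    rw [NNReal.smul_def, Real.coe_toNNReal _ (gaussianPDFReal_nonneg 0 1 x), smul_eq_mul,
      gauss_pdf_mul]
  simp_rw [this]
  exact (integrable_even_pow_gauss m).const_mul _

section PiGauss

noncomputable local instance gaussianSpace : MeasureSpace ℝ := ⟨gaussianReal 0 1⟩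

local instance : SigmaFinite (volume : Measure ℝ) := by
  show SigmaFinite (gaussianReal 0 1); infer_instance

lemma stdGaussian_eq_volume (n : ℕ) :
    stdGaussian n = (volume : Measure (Fin n → ℝ)) := by
  rw [volume_pi]; rfl

lemma integrable_fij {n : ℕ} (i j k : Fin n) :
    Integrable (fun t : ℝ => (if k = i then t^2 else 1) * (if k = j then t^2 else 1))
      (gaussianReal 0 1) := by
  rcases eq_or_ne k i with rfl | h1
  · rcases eq_or_ne k j with rfl | h2
    · simp only [if_pos rfl, ite_true]
      have h4 : (fun t : ℝ => t^2 * t^2) = fun t : ℝ => t^(2*2) := by funext t; ring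
      rw [h4]
      exact integrable_pow_gauss 2
    · simp only [if_pos rfl, ite_true, if_neg h2, mul_one]
      simpa using integrable_pow_gauss 1
  · rcases eq_or_ne k j with rfl | h2
    · simp only [if_pos rfl, ite_true, if_neg h1, one_mul]
      simpa using integrable_pow_gauss 1
    · simp only [if_neg h1, if_neg h2, mul_one]
      exact integrable_const 1

lemma integral_fij {n : ℕ} (i j k : Fin n) :
    ∫ t, (if k = i then t^2 else 1) * (if k = j then t^2 else 1) ∂(gaussianReal 0 1)
      = if k = i ∧ k = j then (3:ℝ) else 1 := by
  rcases eq_or_ne k i with rfl | h1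
  · rcases eq_or_ne k j with rfl | h2
    · simp only [if_pos rfl, ite_true, and_self]
      have h4 : (fun t : ℝ => t^2 * t^2) = fun t : ℝ => t^4 := by funext t; ring
      simp_rw [h4]
      exact gauss_moment_four
    · simp only [if_pos rfl, ite_true, if_neg h2, mul_one, true_and]
      simpa using gauss_moment_two
  · rcases eq_or_ne k j with rfl | h2
    · simp only [if_pos rfl, ite_true, if_neg h1, one_mul, and_true]
      simpa [h1] using gauss_moment_two
    · simp only [if_neg h1, if_neg h2, mul_one]
      simp [h1]
lemma expand_sq_sum {n : ℕ} (u : Fin n → ℝ) :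
    (∑ i, (u i)^2)^2
      = ∑ i, ∑ j, ∏ k, ((if k = i then (u k)^2 else 1) * (if k = j then (u k)^2 else 1)) := by
  rw [sq, Finset.sum_mul_sum]
  refine Finset.sum_congr rfl fun i _ => Finset.sum_congr rfl fun j _ => ?_
  rw [Finset.prod_mul_distrib, Finset.prod_ite_eq', Finset.prod_ite_eq']
  simp

lemma integrable_sq_sum_sq (n : ℕ) :
    Integrable (fun u : Fin n → ℝ => (∑ i, (u i)^2)^2) (stdGaussian n) := by
  rw [stdGaussian_eq_volume]
  simp_rw [expand_sq_sum]
  refine integrable_finset_sum _ fun i _ => integrable_finset_sum _ fun j _ => ?_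
  exact Integrable.fintype_prod (𝕜 := ℝ) (f := fun k t => (if k = i then t^2 else 1) * (if k = j then t^2 else 1)) (fun k => integrable_fij i j k)

lemma integral_sq_sum_sq (n : ℕ) :
    ∫ u, (∑ i, (u i)^2)^2 ∂(stdGaussian n) = (n:ℝ)^2 + 2*n := by
  rw [stdGaussian_eq_volume]
  simp_rw [expand_sq_sum]
  have hprod : ∀ i j : Fin n, Integrable (fun u : Fin n → ℝ =>
      ∏ k, ((if k = i then (u k)^2 else 1) * (if k = j then (u k)^2 else 1))) :=
    fun i j => Integrable.fintype_prod (𝕜 := ℝ)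
      (f := fun k t => (if k = i then t^2 else 1) * (if k = j then t^2 else 1))
      (fun k => integrable_fij i j k)
  rw [integral_finset_sum _ (fun i _ => integrable_finset_sum _ fun j _ => hprod i j)]
  have hterm : ∀ i j : Fin n,
      (∫ u : Fin n → ℝ, ∏ k, ((if k = i then (u k)^2 else 1) * (if k = j then (u k)^2 else 1)))
        = if i = j then (3:ℝ) else 1 := by
    intro i j
    rw [integral_fintype_prod_volume_eq_prod
      (f := fun k t => (if k = i then t^2 else 1) * (if k = j then t^2 else 1))]
    have h1 : ∀ k : Fin n, (∫ t, (if k = i then t^2 else 1) * (if k = j then t^2 else 1))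
        = if k = i ∧ k = j then (3:ℝ) else 1 := fun k => integral_fij i j k
    simp_rw [h1]
    by_cases h : i = j
    · subst h
      simp [Finset.prod_ite_eq']
    · have hk : ∀ k : Fin n, ¬(k = i ∧ k = j) := by
        rintro k ⟨rfl, rfl⟩; exact h rfl
      simp [hk, h]
  have hsum : ∀ i : Fin n, (∑ j, if i = j then (3:ℝ) else 1) = 2 + n := by
    intro i
    have h2 : ∀ j : Fin n, (if i = j then (3:ℝ) else 1) = (if i = j then (2:ℝ) else 0) + 1 := by
      intro j; by_cases h : i = j <;> simp [h] <;> norm_num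
    simp_rw [h2]
    rw [Finset.sum_add_distrib, Finset.sum_ite_eq]
    simp
  calc ∑ i, ∫ u : Fin n → ℝ, ∑ j, ∏ k,
          ((if k = i then (u k)^2 else 1) * (if k = j then (u k)^2 else 1))
      = ∑ i, ∑ j, ∫ u : Fin n → ℝ, ∏ k,
          ((if k = i then (u k)^2 else 1) * (if k = j then (u k)^2 else 1)) :=
        Finset.sum_congr rfl fun i _ => integral_finset_sum _ fun j _ => hprod i j
    _ = ∑ i : Fin n, ((2:ℝ) + n) := by
        refine Finset.sum_congr rfl fun i _ => ?_
        rw [← hsum i]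
        exact Finset.sum_congr rfl fun j _ => hterm i j
    _ = (n:ℝ)^2 + 2*n := by
        rw [Finset.sum_const, Finset.card_univ, Fintype.card_fin, nsmul_eq_mul]
        ring

end PiGauss

end Aux

/-- if F is L₀-Lipschitz then E[‖g_μ(x)‖²] ≤ L₀²(n+4)². -/
theorem stmt11 {n : ℕ} (F : (Fin n → ℝ) → ℝ) (L₀ : ℝ) (hL₀ : 0 < L₀)
    (hLip : ∀ x y : Fin n → ℝ, |F x - F y| ≤ L₀ * euclNorm (x - y))
    (μ : ℝ) (hμ : 0 < μ) (x : Fin n → ℝ) :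
    ∫ u, euclNorm (twoPoint F μ x u) ^ 2 ∂(stdGaussian n) ≤ L₀^2 * (n + 4)^2 := by
  have key : ∀ u : Fin n → ℝ,
      euclNorm (twoPoint F μ x u) ^ 2 ≤ L₀^2 * (∑ i, (u i)^2)^2 := by
    intro u
    set S := ∑ i, (u i)^2 with hS
    have hSnn : (0:ℝ) ≤ S := Finset.sum_nonneg fun i _ => sq_nonneg _
    have h1 : euclNorm (twoPoint F μ x u) ^ 2
        = ((F (x + μ • u) - F x) / μ)^2 * S := by
      rw [euclNorm, Real.sq_sqrt (Finset.sum_nonneg fun i _ => sq_nonneg _)]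
      simp only [twoPoint, mul_pow, ← Finset.mul_sum, hS]
    have hE : euclNorm (x + μ • u - x) = μ * Real.sqrt S := by
      have hx : x + μ • u - x = μ • u := by abel
      rw [hx, euclNorm]
      have : ∀ i, ((μ • u) i)^2 = μ^2 * (u i)^2 := by
        intro i; simp [Pi.smul_apply, smul_eq_mul]; ring
      simp_rw [this, ← Finset.mul_sum]
      rw [Real.sqrt_mul (sq_nonneg μ), Real.sqrt_sq hμ.le, hS]
    have hLipb : |F (x + μ • u) - F x| ≤ L₀ * (μ * Real.sqrt S) := by
      have h := hLip (x + μ • u) x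
      rwa [hE] at h
    have hc : ((F (x + μ • u) - F x) / μ)^2 ≤ L₀^2 * S := by
      rw [div_pow, div_le_iff₀ (by positivity)]
      have h2 : (F (x + μ • u) - F x)^2 ≤ (L₀ * (μ * Real.sqrt S))^2 := by
        rw [← sq_abs (F (x + μ • u) - F x)]
        exact pow_le_pow_left₀ (abs_nonneg _) hLipb 2
      calc (F (x + μ • u) - F x)^2 ≤ (L₀ * (μ * Real.sqrt S))^2 := h2
        _ = L₀^2 * (Real.sqrt S ^ 2) * μ^2 := by ring
        _ = L₀^2 * S * μ^2 := by rw [Real.sq_sqrt hSnn]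
    calc euclNorm (twoPoint F μ x u) ^ 2 = ((F (x + μ • u) - F x) / μ)^2 * S := h1
      _ ≤ (L₀^2 * S) * S := mul_le_mul_of_nonneg_right hc hSnn
      _ = L₀^2 * S^2 := by ring
  have hInt : Integrable (fun u : Fin n → ℝ => L₀^2 * (∑ i, (u i)^2)^2) (stdGaussian n) :=
    (integrable_sq_sum_sq n).const_mul _
  have hmono := integral_mono_of_nonneg (μ := stdGaussian n)
    (f := fun u => euclNorm (twoPoint F μ x u) ^ 2)
    (g := fun u => L₀^2 * (∑ i, (u i)^2)^2)
    (Filter.Eventually.of_forall fun u => sq_nonneg _) hInt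
    (Filter.Eventually.of_forall key)
  have hval : ∫ u, L₀^2 * (∑ i, (u i)^2)^2 ∂(stdGaussian n) = L₀^2 * ((n:ℝ)^2 + 2*n) := by
    rw [integral_const_mul, integral_sq_sum_sq n]
  have hfin : L₀^2 * ((n:ℝ)^2 + 2*n) ≤ L₀^2 * ((n:ℝ) + 4)^2 := by
    apply mul_le_mul_of_nonneg_left _ (sq_nonneg L₀)
    have : (0:ℝ) ≤ (n:ℝ) := Nat.cast_nonneg n
    nlinarith
  calc ∫ u, euclNorm (twoPoint F μ x u) ^ 2 ∂(stdGaussian n)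
      ≤ ∫ u, L₀^2 * (∑ i, (u i)^2)^2 ∂(stdGaussian n) := hmono
    _ = L₀^2 * ((n:ℝ)^2 + 2*n) := hval
    _ ≤ L₀^2 * ((n:ℝ) + 4)^2 := hfin
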